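/- For each κ-subset R of [n], let p_R = Σ_{σ ∈ Sym([n]∖R)} Π_{i∉R} x_{i,σ(i)} (the permanent of the complementary principal submatrix). Then the family {p_R : R ⊆ [n], |R| = κ} is linearly independent over the base field, and hence the span of the order-κ partial derivatives of Perm_n has dimension at least C(n, κ). -/

import Mathlib

open MvPolynomial

/-- The `n × n` permanent polynomial `Σ_{π ∈ S_n} Π_i x_{i, π(i)}`. -/
noncomputable def permPoly (F : Type*) [CommRing F] (n : ℕ) :
    MvPolynomial (Fin n × Fin n) F :=
  ∑ π : Equiv.Perm (Fin n), ∏ i : Fin n, X (i, π i)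

/-- The permanent of the principal submatrix complementary to `R`:
`p_R = Σ_{σ ∈ Sym([n]∖R)} Π_{i ∉ R} x_{i, σ(i)}`. -/
noncomputable def subPerm (F : Type*) [CommRing F] {n : ℕ} (R : Finset (Fin n)) :
    MvPolynomial (Fin n × Fin n) F :=
  ∑ σ : Equiv.Perm {i : Fin n // i ∉ R}, ∏ i : {i : Fin n // i ∉ R},
    X ((i : Fin n), ((σ i : Fin n)))

section Aux

variable {F : Type*} [CommRing F] {n : ℕ}

/-- The exponent vector of the monomial `Π_{j ∉ A} x_{j, σ(j)}`. -/
noncomputable def expOf (A : Finset (Fin n)) (σ : Equiv.Perm {i : Fin n // i ∉ A}) :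
    (Fin n × Fin n) →₀ ℕ :=
  ∑ j : {i : Fin n // i ∉ A}, Finsupp.single ((j : Fin n), (σ j : Fin n)) 1

lemma prod_X_single {ι : Type*} (s : Finset ι) (f : ι → Fin n × Fin n) :
    (∏ j ∈ s, (X (f j) : MvPolynomial (Fin n × Fin n) F)) =
      monomial (∑ j ∈ s, Finsupp.single (f j) 1) 1 := by
  classical
  induction s using Finset.induction_on with
  | empty => simp [monomial_zero']
  | insert _ _ h ih =>
    rw [Finset.prod_insert h, Finset.sum_insert h, ih, X, monomial_mul, one_mul]

lemma subPerm_eq (A : Finset (Fin n)) :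
    subPerm F A = ∑ σ : Equiv.Perm {i : Fin n // i ∉ A}, monomial (expOf A σ) (1 : F) :=
  Finset.sum_congr rfl fun σ _ => prod_X_single _ _

lemma expOf_apply_of_not_mem (A : Finset (Fin n)) (σ : Equiv.Perm {i : Fin n // i ∉ A})
    {a : Fin n} (ha : a ∉ A) (b : Fin n) :
    expOf A σ (a, b) = if (σ ⟨a, ha⟩ : Fin n) = b then 1 else 0 := by
  classical
  rw [expOf, Finsupp.finset_sum_apply]
  rw [Finset.sum_eq_single (⟨a, ha⟩ : {i : Fin n // i ∉ A})]
  · simp [Finsupp.single_apply, Prod.ext_iff]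
  · intro j _ hj
    have : (j : Fin n) ≠ a := fun h => hj (Subtype.ext h)
    simp [Finsupp.single_apply, Prod.ext_iff, this]
  · intro h; exact absurd (Finset.mem_univ _) h

lemma expOf_apply_of_mem (A : Finset (Fin n)) (σ : Equiv.Perm {i : Fin n // i ∉ A})
    {a : Fin n} (ha : a ∈ A) (b : Fin n) :
    expOf A σ (a, b) = 0 := by
  classical
  rw [expOf, Finsupp.finset_sum_apply]
  apply Finset.sum_eq_zero
  intro j _
  have : (j : Fin n) ≠ a := fun h => j.2 (h ▸ ha)
  simp [Finsupp.single_apply, Prod.ext_iff, this]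

lemma expOf_eq_R {R R' : Finset (Fin n)} {σ : Equiv.Perm {i : Fin n // i ∉ R'}}
    (h : expOf R' σ = expOf R 1) : R' = R := by
  ext a
  rw [← not_iff_not]
  constructor
  · intro ha'
    by_contra ha
    have h1 : expOf R' σ (a, (σ ⟨a, ha'⟩ : Fin n)) = 1 := by
      rw [expOf_apply_of_not_mem R' σ ha']; simp
    rw [h, expOf_apply_of_mem R 1 ha] at h1
    exact one_ne_zero h1.symm
  · intro ha
    by_contra ha'
    have h1 : expOf R 1 (a, a) = 1 := by
      rw [expOf_apply_of_not_mem R 1 ha]; simp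
    rw [← h, expOf_apply_of_mem R' σ (not_not.mp fun hc => hc ha')] at h1
    exact one_ne_zero h1.symm

lemma expOf_eq_one {R : Finset (Fin n)} {σ : Equiv.Perm {i : Fin n // i ∉ R}}
    (h : expOf R σ = expOf R 1) : σ = 1 := by
  ext j
  have h1 : expOf R σ ((j : Fin n), (σ j : Fin n)) = 1 := by
    rw [expOf_apply_of_not_mem R σ j.2]; simp
  rw [h, expOf_apply_of_not_mem R 1 j.2] at h1
  simp only [Equiv.Perm.coe_one, id_eq] at h1
  have h2 : (j : Fin n) = (σ j : Fin n) := by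
    by_contra hc
    simp [hc] at h1
  simp only [Equiv.Perm.coe_one, id_eq]
  exact congrArg (fun x : {i : Fin n // i ∉ R} => ((x : Fin n) : ℕ)) (Subtype.ext h2).symm

lemma coeff_subPerm (R R' : Finset (Fin n)) :
    coeff (expOf R 1) (subPerm F R') = if R' = R then 1 else 0 := by
  classical
  rw [subPerm_eq, coeff_sum]
  simp_rw [coeff_monomial]
  by_cases hR : R' = R
  · subst hR
    have key : ∀ σ : Equiv.Perm {i : Fin n // i ∉ R'},
        (expOf R' σ = expOf R' 1) ↔ σ = 1 := by
      intro σ; exact ⟨expOf_eq_one, fun h => h ▸ rfl⟩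
    simp only [key, if_pos rfl]
    rw [Finset.sum_ite_eq' Finset.univ (1 : Equiv.Perm {i : Fin n // i ∉ R'})
      (fun _ => (1 : F))]
    simp
  · rw [if_neg hR]
    apply Finset.sum_eq_zero
    intro σ _
    exact if_neg fun hc => hR (expOf_eq_R hc)

lemma subPerm_linearIndependent (κ : ℕ) :
    LinearIndependent F
      (fun R : {R : Finset (Fin n) // R.card = κ} => subPerm F R.1) := by
  classical
  rw [Fintype.linearIndependent_iff]
  intro g hg R
  have h := congrArg (coeff (expOf R.1 1)) hg
  rw [coeff_sum, coeff_zero] at h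
  simp only [coeff_smul, coeff_subPerm, smul_eq_mul] at h
  have h2 : ∀ R' : {R : Finset (Fin n) // R.card = κ},
      (R'.1 = R.1) ↔ R' = R := fun R' => ⟨fun h => Subtype.ext h, fun h => h ▸ rfl⟩
  simp only [h2, mul_ite, mul_one, mul_zero] at h
  rw [Finset.sum_ite_eq' Finset.univ R g] at h
  simpa using h

/-- The equivalence between `[n] ∖ (insert i A)` and the elements of `[n] ∖ A`
different from `i`. -/
def resEquiv (A : Finset (Fin n)) (i : Fin n) (hi : i ∉ A) :
    {j : Fin n // j ∉ insert i A} ≃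
      {x : {j : Fin n // j ∉ A} // x ≠ (⟨i, hi⟩ : {j : Fin n // j ∉ A})} where
  toFun j := ⟨⟨j.1, fun h => j.2 (Finset.mem_insert_of_mem h)⟩,
    fun h => j.2 (by rw [Finset.mem_insert]; exact Or.inl (congrArg Subtype.val h))⟩
  invFun x := ⟨x.1.1, by
    rw [Finset.mem_insert]
    rintro (h | h)
    · exact x.2 (Subtype.ext h)
    · exact x.1.2 h⟩
  left_inv j := rfl
  right_inv x := rfl

lemma pderiv_subPerm {A : Finset (Fin n)} {i : Fin n} (hi : i ∉ A) :
    pderiv (i, i) (subPerm F A) = subPerm F (insert i A) := by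
  classical
  set i0 : {j : Fin n // j ∉ A} := ⟨i, hi⟩ with hi0
  set g := resEquiv A i hi with hg
  set E := (Equiv.permCongr g).trans
    (Equiv.Perm.subtypeEquivSubtypePerm (fun x : {j : Fin n // j ∉ A} => x ≠ i0)) with hE
  have hfix : ∀ τ, (E τ).1 i0 = i0 := fun τ => (E τ).2 i0 (not_not_intro rfl)
  have happ : ∀ (τ) (j : {j : Fin n // j ∉ insert i A}),
      (E τ).1 ((g j : {j : Fin n // j ∉ A})) = g (τ j) := by
    intro τ j
    have hp : ((g j : {j : Fin n // j ∉ A}) : {j : Fin n // j ∉ A}) ≠ i0 := (g j).2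
    have := Equiv.Perm.ofSubtype_apply_of_mem
      (p := fun x : {j : Fin n // j ∉ A} => x ≠ i0) (Equiv.permCongr g τ) hp
    simpa [hE, Equiv.Perm.subtypeEquivSubtypePerm, Subtype.coe_eta] using this
  -- key exponent identity
  have hexp : ∀ τ, expOf A (E τ).1 =
      Finsupp.single (i, i) 1 + expOf (insert i A) τ := by
    intro τ
    rw [expOf, ← Finset.add_sum_erase Finset.univ _ (Finset.mem_univ i0)]
    congr 1
    · rw [hfix]
    · rw [Finset.sum_subtype (Finset.univ.erase i0)
        (p := fun x : {j : Fin n // j ∉ A} => x ≠ i0) (fun x => by simp)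
        (fun x => Finsupp.single ((x : Fin n), ((E τ).1 x : Fin n)) 1)]
      rw [← Equiv.sum_comp g
        (fun x : {x : {j : Fin n // j ∉ A} // x ≠ i0} =>
          Finsupp.single (((x : {j : Fin n // j ∉ A}) : Fin n),
            ((E τ).1 (x : {j : Fin n // j ∉ A}) : Fin n)) 1)]
      refine Finset.sum_congr rfl fun j _ => ?_
      rw [happ]
      rfl
  rw [subPerm_eq, map_sum]
  simp_rw [pderiv_monomial, one_mul]
  have hcoef : ∀ σ : Equiv.Perm {j : Fin n // j ∉ A},
      (expOf A σ (i, i) : F) = if σ i0 = i0 then 1 else 0 := by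
    intro σ
    rw [expOf_apply_of_not_mem A σ hi]
    by_cases hc : σ i0 = i0
    · rw [if_pos hc, if_pos]; · simp
      · exact congrArg Subtype.val hc
    · rw [if_neg hc, if_neg]; · simp
      · intro h; exact hc (Subtype.ext h)
  calc (∑ σ : Equiv.Perm {j : Fin n // j ∉ A},
        monomial (expOf A σ - Finsupp.single (i, i) 1) ((expOf A σ (i, i) : F)))
      = ∑ σ : Equiv.Perm {j : Fin n // j ∉ A},
          (if σ i0 = i0 then
            monomial (expOf A σ - Finsupp.single (i, i) 1) (1 : F) else 0) := by
        refine Finset.sum_congr rfl fun σ _ => ?_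
        rw [hcoef]
        split_ifs <;> simp
    _ = ∑ σ ∈ Finset.univ.filter (fun σ : Equiv.Perm {j : Fin n // j ∉ A} => σ i0 = i0),
          monomial (expOf A σ - Finsupp.single (i, i) 1) (1 : F) :=
        (Finset.sum_filter _ _).symm
    _ = ∑ x : {f : Equiv.Perm {j : Fin n // j ∉ A} // ∀ a, ¬ a ≠ i0 → f a = a},
          monomial (expOf A x.1 - Finsupp.single (i, i) 1) (1 : F) := by
        refine Finset.sum_subtype _ (fun σ => ?_) _
        simp only [Finset.mem_filter, Finset.mem_univ, true_and]
        constructor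
        · intro h a ha
          rw [not_not] at ha; subst ha; exact h
        · intro h; exact h i0 (not_not_intro rfl)
    _ = ∑ τ : Equiv.Perm {j : Fin n // j ∉ insert i A},
          monomial (expOf A (E τ).1 - Finsupp.single (i, i) 1) (1 : F) :=
        (Equiv.sum_comp E _).symm
    _ = ∑ τ : Equiv.Perm {j : Fin n // j ∉ insert i A},
          monomial (expOf (insert i A) τ) (1 : F) := by
        refine Finset.sum_congr rfl fun τ _ => ?_
        rw [hexp, add_tsub_cancel_left]
    _ = subPerm F (insert i A) := (subPerm_eq _).symm

lemma permPoly_eq : permPoly F n = subPerm F (∅ : Finset (Fin n)) := by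
  classical
  rw [permPoly, subPerm]
  refine (Fintype.sum_equiv
    (Equiv.permCongr (Equiv.subtypeUnivEquiv
      (fun x : Fin n => Finset.notMem_empty x))) _ _ fun σ => ?_).symm
  refine Fintype.prod_equiv (Equiv.subtypeUnivEquiv
      (fun x : Fin n => Finset.notMem_empty x)) _ _ fun j => ?_
  simp [Equiv.permCongr_apply, Equiv.subtypeUnivEquiv]

lemma foldr_pderiv (l : List (Fin n × Fin n)) (hd : ∀ v ∈ l, v.1 = v.2) (hnd : l.Nodup)
    (A : Finset (Fin n)) (hA : ∀ v ∈ l, v.1 ∉ A) :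
    l.foldr (fun v r => pderiv v r) (subPerm F A) =
      subPerm F (A ∪ l.toFinset.image Prod.fst) := by
  classical
  induction l with
  | nil => simp
  | cons v t ih =>
    have hv : v.1 = v.2 := hd v List.mem_cons_self
    have hstep := ih (fun u hu => hd u (List.mem_cons_of_mem _ hu))
      (List.Nodup.of_cons hnd) (fun u hu => hA u (List.mem_cons_of_mem _ hu))
    rw [List.foldr_cons, hstep]
    have hmem : v.1 ∉ A ∪ t.toFinset.image Prod.fst := by
      rw [Finset.mem_union]
      rintro (h | h)
      · exact hA v List.mem_cons_self h
      · obtain ⟨u, hu, hu1⟩ := Finset.mem_image.mp h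
        rw [List.mem_toFinset] at hu
        have : u = v := by
          have h2 : u.2 = v.2 := by rw [← hd u (List.mem_cons_of_mem _ hu), hu1, hv]
          exact Prod.ext hu1 h2
        exact (List.nodup_cons.mp hnd).1 (this ▸ hu)
    have hset : A ∪ (v :: t).toFinset.image Prod.fst =
        insert v.1 (A ∪ t.toFinset.image Prod.fst) := by
      rw [List.toFinset_cons, Finset.image_insert]
      ext x
      simp only [Finset.mem_insert, Finset.mem_union, Finset.mem_image]
      tauto
    rw [hset]
    have hvv : v = (v.1, v.1) := by rw [Prod.ext_iff]; exact ⟨rfl, hv.symm⟩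
    rw [show (pderiv v (subPerm F (A ∪ t.toFinset.image Prod.fst)) :
        MvPolynomial (Fin n × Fin n) F) =
        pderiv (v.1, v.1) (subPerm F (A ∪ t.toFinset.image Prod.fst)) from by rw [← hvv]]
    exact pderiv_subPerm hmem

end Aux

/-- The family `{p_R : |R| = κ}` of complementary sub-permanents is linearly
independent, and hence the span of the order-`κ` partial derivatives of the
permanent has dimension at least `C(n, κ)`. -/
theorem subPerm_linearIndependent_and_rank (F : Type*) [Field F] (n κ : ℕ) :
    LinearIndependent F
      (fun R : {R : Finset (Fin n) // R.card = κ} => subPerm F R.1) ∧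
    n.choose κ ≤ Module.finrank F (Submodule.span F
      { q : MvPolynomial (Fin n × Fin n) F |
        ∃ S : Finset (Fin n × Fin n), S.card = κ ∧
          q = S.toList.foldr (fun v r => pderiv v r) (permPoly F n) }) := by
  classical
  have li := subPerm_linearIndependent (F := F) (n := n) κ
  refine ⟨li, ?_⟩
  set D : Set (MvPolynomial (Fin n × Fin n) F) :=
    { q | ∃ S : Finset (Fin n × Fin n), S.card = κ ∧
        q = S.toList.foldr (fun v r => pderiv v r) (permPoly F n) } with hD
  have hDfin : D.Finite := by
    have hsub : D ⊆ (fun S : Finset (Fin n × Fin n) =>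
        S.toList.foldr (fun v r => pderiv v r) (permPoly F n)) '' Set.univ := by
      rintro q ⟨S, _, rfl⟩; exact ⟨S, trivial, rfl⟩
    exact (Set.finite_univ.image _).subset hsub
  have : Module.Finite F (Submodule.span F D) := Module.Finite.span_of_finite F hDfin
  have hmem : ∀ R : {R : Finset (Fin n) // R.card = κ},
      subPerm F R.1 ∈ Submodule.span F D := by
    intro R
    apply Submodule.subset_span
    have hinj : Function.Injective (fun i : Fin n => ((i, i) : Fin n × Fin n)) :=
      fun a b h => (Prod.ext_iff.mp h).1
    refine ⟨R.1.image (fun i => (i, i)), ?_, ?_⟩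
    · rw [Finset.card_image_of_injective _ hinj]; exact R.2
    · set S := R.1.image (fun i : Fin n => ((i, i) : Fin n × Fin n)) with hS
      have hd : ∀ v ∈ S.toList, v.1 = v.2 := by
        intro v hv
        rw [Finset.mem_toList, hS, Finset.mem_image] at hv
        obtain ⟨a, _, rfl⟩ := hv
        rfl
      rw [permPoly_eq, foldr_pderiv S.toList hd S.nodup_toList ∅ (by simp)]
      congr 1
      rw [Finset.toList_toFinset, hS, Finset.image_image, Finset.empty_union]
      have hcomp : (Prod.fst ∘ fun i : Fin n => ((i, i) : Fin n × Fin n)) = id := rfl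
      rw [hcomp, Finset.image_id]
  let v : {R : Finset (Fin n) // R.card = κ} → Submodule.span F D :=
    fun R => ⟨subPerm F R.1, hmem R⟩
  have liv : LinearIndependent F v := by
    apply LinearIndependent.of_comp (Submodule.span F D).subtype
    exact li
  have hcard := liv.fintype_card_le_finrank
  rwa [Fintype.card_finset_len, Fintype.card_fin] at hcard
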